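/- Let x ∈ ℝ² be regular, i.e. B(x,γ) ≠ 0 for every γ ∈ Φ. Then the Weyl-group orbit {w·x : w ∈ W} has exactly 12 elements, and under the action of the subgroup W_H of W generated by the reflections s_{(2,0)} and s_{(0,2)} this orbit decomposes into exactly 3 orbits, each of size 4. (This shows the fibers of the induced map on semisimple conjugacy classes from the dual of H = SL₂×SL₂/±1 to the dual of G₂ have size 3 at regular elements.) -/

import Mathlib

noncomputable section

/-- The bilinear form `B((x₁,x₂),(y₁,y₂)) = x₁y₁ + 3x₂y₂` on `ℝ²`. -/
def B (x y : ℝ × ℝ) : ℝ := x.1 * y.1 + 3 * x.2 * y.2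

/-- The short simple root of `G₂`. -/
def α₁ : ℝ × ℝ := (-1, 1)
/-- The long simple root of `G₂`. -/
def α₂ : ℝ × ℝ := (3, -1)

/-- The `B`-orthogonal reflection in `α`, as a linear map. -/
def reflLM (α : ℝ × ℝ) : (ℝ × ℝ) →ₗ[ℝ] (ℝ × ℝ) where
  toFun x := x - (2 * B x α / B α α) • α
  map_add' x y := by
    simp only [B, Prod.fst_add, Prod.snd_add, Prod.smul_mk, smul_eq_mul, Prod.mk_add_mk,
      Prod.ext_iff, Prod.fst_sub, Prod.snd_sub, Prod.smul_fst, Prod.smul_snd]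
    constructor <;> ring
  map_smul' c x := by
    simp only [B, Prod.smul_fst, Prod.smul_snd, smul_eq_mul, RingHom.id_apply,
      Prod.ext_iff, Prod.fst_sub, Prod.snd_sub]
    constructor <;> ring

/-- The `B`-orthogonal reflection in `α`, as a linear automorphism, given that the
reflection is involutive. -/
def reflLE (α : ℝ × ℝ) (h : (reflLM α).comp (reflLM α) = LinearMap.id) :
    (ℝ × ℝ) ≃ₗ[ℝ] (ℝ × ℝ) :=
  LinearEquiv.ofLinear (reflLM α) (reflLM α) h h

lemma invol₁ : (reflLM α₁).comp (reflLM α₁) = LinearMap.id := by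
  apply LinearMap.ext
  intro x
  simp only [LinearMap.comp_apply, LinearMap.id_apply, reflLM, LinearMap.coe_mk, AddHom.coe_mk,
    B, α₁, Prod.ext_iff, Prod.fst_sub, Prod.snd_sub, Prod.smul_fst, Prod.smul_snd, smul_eq_mul]
  norm_num
  constructor <;> ring

lemma invol₂ : (reflLM α₂).comp (reflLM α₂) = LinearMap.id := by
  apply LinearMap.ext
  intro x
  simp only [LinearMap.comp_apply, LinearMap.id_apply, reflLM, LinearMap.coe_mk, AddHom.coe_mk,
    B, α₂, Prod.ext_iff, Prod.fst_sub, Prod.snd_sub, Prod.smul_fst, Prod.smul_snd, smul_eq_mul]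
  norm_num
  constructor <;> ring

/-- The simple reflection `s₁ = s_{α₁}`. -/
def s₁ : (ℝ × ℝ) ≃ₗ[ℝ] (ℝ × ℝ) := reflLE α₁ invol₁

/-- The simple reflection `s₂ = s_{α₂}`. -/
def s₂ : (ℝ × ℝ) ≃ₗ[ℝ] (ℝ × ℝ) := reflLE α₂ invol₂

/-- The Weyl group of `G₂`, as the subgroup of linear automorphisms of `ℝ²`
generated by `s₁` and `s₂`. -/
def W : Subgroup ((ℝ × ℝ) ≃ₗ[ℝ] (ℝ × ℝ)) := Subgroup.closure {s₁, s₂}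

/-- The set of roots of `G₂`. -/
def Φ : Set (ℝ × ℝ) :=
  {(2,0), (-2,0), (1,1), (1,-1), (-1,1), (-1,-1),
   (0,2), (0,-2), (3,1), (3,-1), (-3,1), (-3,-1)}

lemma involT₁ : (reflLM ((2 : ℝ), (0 : ℝ))).comp (reflLM ((2 : ℝ), (0 : ℝ)))
    = LinearMap.id := by
  apply LinearMap.ext
  intro x
  simp only [LinearMap.comp_apply, LinearMap.id_apply, reflLM, LinearMap.coe_mk, AddHom.coe_mk,
    B, Prod.ext_iff, Prod.fst_sub, Prod.snd_sub, Prod.smul_fst, Prod.smul_snd, smul_eq_mul]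
  norm_num
  ring

lemma involT₂ : (reflLM ((0 : ℝ), (2 : ℝ))).comp (reflLM ((0 : ℝ), (2 : ℝ)))
    = LinearMap.id := by
  apply LinearMap.ext
  intro x
  simp only [LinearMap.comp_apply, LinearMap.id_apply, reflLM, LinearMap.coe_mk, AddHom.coe_mk,
    B, Prod.ext_iff, Prod.fst_sub, Prod.snd_sub, Prod.smul_fst, Prod.smul_snd, smul_eq_mul]
  norm_num
  ring

/-- The reflection in the root `2ε₁ = (2,0)`. -/
def t₁ : (ℝ × ℝ) ≃ₗ[ℝ] (ℝ × ℝ) := reflLE ((2 : ℝ), (0 : ℝ)) involT₁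

/-- The reflection in the root `2ε₂ = (0,2)`. -/
def t₂ : (ℝ × ℝ) ≃ₗ[ℝ] (ℝ × ℝ) := reflLE ((0 : ℝ), (2 : ℝ)) involT₂

/-- The Weyl group `W_H` of `H`, generated by the reflections `s_{(2,0)}` and
`s_{(0,2)}`. -/
def WH : Subgroup ((ℝ × ℝ) ≃ₗ[ℝ] (ℝ × ℝ)) := Subgroup.closure {t₁, t₂}

/-- The `W`-orbit of a point. -/
def orbW (x : ℝ × ℝ) : Set (ℝ × ℝ) := {y | ∃ w ∈ W, y = w x}

/-- The `W_H`-orbit of a point. -/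
def orbWH (x : ℝ × ℝ) : Set (ℝ × ℝ) := {y | ∃ w ∈ WH, y = w x}

lemma mul_apply' (e f : (ℝ × ℝ) ≃ₗ[ℝ] (ℝ × ℝ)) (x : ℝ × ℝ) : (e * f) x = e (f x) := rfl

lemma s₁_apply (c d : ℝ) : s₁ (c, d) = ((c + 3*d)/2, (c - d)/2) := by
  simp only [s₁, reflLE, LinearEquiv.ofLinear_apply, reflLM, LinearMap.coe_mk, AddHom.coe_mk,
    B, α₁, Prod.ext_iff, Prod.fst_sub, Prod.snd_sub, Prod.smul_fst, Prod.smul_snd, smul_eq_mul]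
  norm_num
  constructor <;> ring

lemma s₂_apply (c d : ℝ) : s₂ (c, d) = ((-c + 3*d)/2, (c + d)/2) := by
  simp only [s₂, reflLE, LinearEquiv.ofLinear_apply, reflLM, LinearMap.coe_mk, AddHom.coe_mk,
    B, α₂, Prod.ext_iff, Prod.fst_sub, Prod.snd_sub, Prod.smul_fst, Prod.smul_snd, smul_eq_mul]
  norm_num
  constructor <;> ring

lemma t₁_apply (c d : ℝ) : t₁ (c, d) = (-c, d) := by
  simp only [t₁, reflLE, LinearEquiv.ofLinear_apply, reflLM, LinearMap.coe_mk, AddHom.coe_mk,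
    B, Prod.ext_iff, Prod.fst_sub, Prod.snd_sub, Prod.smul_fst, Prod.smul_snd, smul_eq_mul]
  norm_num
  ring

lemma t₂_apply (c d : ℝ) : t₂ (c, d) = (c, -d) := by
  simp only [t₂, reflLE, LinearEquiv.ofLinear_apply, reflLM, LinearMap.coe_mk, AddHom.coe_mk,
    B, Prod.ext_iff, Prod.fst_sub, Prod.snd_sub, Prod.smul_fst, Prod.smul_snd, smul_eq_mul]
  norm_num
  ring

lemma s₁_inv : s₁⁻¹ = s₁ := rfl
lemma s₂_inv : s₂⁻¹ = s₂ := rfl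
lemma t₁_inv : t₁⁻¹ = t₁ := rfl
lemma t₂_inv : t₂⁻¹ = t₂ := rfl

def orb4 (c d : ℝ) : Set (ℝ × ℝ) := {(c,d), (-c,d), (c,-d), (-c,-d)}

lemma orbWH_eq (c d : ℝ) : orbWH (c,d) = orb4 c d := by
  apply Set.Subset.antisymm
  · rintro y ⟨w, hw, rfl⟩
    have key : ∀ (u : (ℝ × ℝ) ≃ₗ[ℝ] (ℝ × ℝ)), u ∈ WH →
        (∀ z ∈ orb4 c d, u z ∈ orb4 c d) ∧ (∀ z ∈ orb4 c d, u⁻¹ z ∈ orb4 c d) := by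
      intro u hu
      refine Subgroup.closure_induction (p := fun u _ =>
        (∀ z ∈ orb4 c d, u z ∈ orb4 c d) ∧ (∀ z ∈ orb4 c d, u⁻¹ z ∈ orb4 c d)) ?_ ?_ ?_ ?_ hu
      · rintro x (rfl | rfl)
        · constructor <;>
          · rintro z (rfl | rfl | rfl | rfl) <;>
              simp only [t₁_inv, t₁_apply, orb4, Set.mem_insert_iff, Set.mem_singleton_iff,
                Prod.mk.injEq, neg_neg] <;> tauto
        · constructor <;>
          · rintro z (rfl | rfl | rfl | rfl) <;>
              simp only [t₂_inv, t₂_apply, orb4, Set.mem_insert_iff, Set.mem_singleton_iff,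
                Prod.mk.injEq, neg_neg] <;> tauto
      · simp
      · intro a b _ _ ha hb
        refine ⟨fun z hz => ?_, fun z hz => ?_⟩
        · rw [mul_apply']; exact ha.1 _ (hb.1 _ hz)
        · rw [mul_inv_rev, mul_apply']; exact hb.2 _ (ha.2 _ hz)
      · intro a _ ha
        exact ⟨ha.2, by simpa using ha.1⟩
    have hx : (c, d) ∈ orb4 c d := by simp [orb4]
    exact (key w hw).1 _ hx
  · have h1 : t₁ ∈ WH := Subgroup.subset_closure (by simp)
    have h2 : t₂ ∈ WH := Subgroup.subset_closure (by simp)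
    rintro z (rfl | rfl | rfl | rfl)
    · exact ⟨1, one_mem _, by simp⟩
    · exact ⟨t₁, h1, by rw [t₁_apply]⟩
    · exact ⟨t₂, h2, by rw [t₂_apply]⟩
    · exact ⟨t₁ * t₂, mul_mem h1 h2, by rw [mul_apply', t₂_apply, t₁_apply]⟩

lemma orb4_neg_left (c d : ℝ) : orb4 (-c) d = orb4 c d := by
  ext ⟨u, v⟩
  simp only [orb4, Set.mem_insert_iff, Set.mem_singleton_iff, Prod.mk.injEq, neg_neg]
  tauto

lemma orb4_neg_right (c d : ℝ) : orb4 c (-d) = orb4 c d := by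
  ext ⟨u, v⟩
  simp only [orb4, Set.mem_insert_iff, Set.mem_singleton_iff, Prod.mk.injEq, neg_neg]
  tauto

lemma pair_ne_fst {c d c' d' : ℝ} (h : c ≠ c') : ((c,d) : ℝ × ℝ) ≠ (c',d') :=
  fun h' => h (congrArg Prod.fst h')

lemma pair_ne_snd {c d c' d' : ℝ} (h : d ≠ d') : ((c,d) : ℝ × ℝ) ≠ (c',d') :=
  fun h' => h (congrArg Prod.snd h')

lemma ncard_orb4 {c d : ℝ} (hc : c ≠ 0) (hd : d ≠ 0) : (orb4 c d).ncard = 4 := by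
  rw [orb4, Set.ncard_insert_of_notMem ?h1 (Set.toFinite _),
    Set.ncard_insert_of_notMem ?h2 (Set.toFinite _),
    Set.ncard_insert_of_notMem ?h3 (Set.toFinite _), Set.ncard_singleton]
  case h1 =>
    simp only [Set.mem_insert_iff, Set.mem_singleton_iff, not_or]
    exact ⟨pair_ne_fst fun h => hc (by linarith), pair_ne_snd fun h => hd (by linarith),
      pair_ne_fst fun h => hc (by linarith)⟩
  case h2 =>
    simp only [Set.mem_insert_iff, Set.mem_singleton_iff, not_or]
    exact ⟨pair_ne_fst fun h => hc (by linarith), pair_ne_snd fun h => hd (by linarith)⟩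
  case h3 =>
    simp only [Set.mem_singleton_iff]
    exact pair_ne_fst fun h => hc (by linarith)

lemma mem_orb4_fst {z : ℝ × ℝ} {c d : ℝ} (h : z ∈ orb4 c d) : z.1 = c ∨ z.1 = -c := by
  rcases h with rfl | rfl | rfl | rfl <;> simp

def Uset (a b : ℝ) : Set (ℝ × ℝ) :=
  orb4 a b ∪ orb4 ((a+3*b)/2) ((a-b)/2) ∪ orb4 ((a-3*b)/2) ((a+b)/2)

set_option maxHeartbeats 2000000 in
lemma orbW_eq (a b : ℝ) : orbW (a, b) = Uset a b := by
  apply Set.Subset.antisymm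
  · rintro y ⟨w, hw, rfl⟩
    have key : ∀ (u : (ℝ × ℝ) ≃ₗ[ℝ] (ℝ × ℝ)), u ∈ W →
        (∀ z ∈ Uset a b, u z ∈ Uset a b) ∧ (∀ z ∈ Uset a b, u⁻¹ z ∈ Uset a b) := by
      intro u hu
      refine Subgroup.closure_induction (p := fun u _ =>
        (∀ z ∈ Uset a b, u z ∈ Uset a b) ∧ (∀ z ∈ Uset a b, u⁻¹ z ∈ Uset a b)) ?_ ?_ ?_ ?_ hu
      · rintro x (rfl | rfl)
        · have hc : ∀ z ∈ Uset a b, s₁ z ∈ Uset a b := by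
            rintro z (((rfl | rfl | rfl | rfl) | (rfl | rfl | rfl | rfl)) | (rfl | rfl | rfl | rfl)) <;>
              simp only [s₁_apply, Uset, orb4, Set.mem_union, Set.mem_insert_iff,
                Set.mem_singleton_iff, Prod.mk.injEq] <;> ring_nf <;> tauto
          exact ⟨hc, fun z hz => by rw [s₁_inv]; exact hc z hz⟩
        · have hc : ∀ z ∈ Uset a b, s₂ z ∈ Uset a b := by
            rintro z (((rfl | rfl | rfl | rfl) | (rfl | rfl | rfl | rfl)) | (rfl | rfl | rfl | rfl)) <;>
              simp only [s₂_apply, Uset, orb4, Set.mem_union, Set.mem_insert_iff,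
                Set.mem_singleton_iff, Prod.mk.injEq] <;> ring_nf <;> tauto
          exact ⟨hc, fun z hz => by rw [s₂_inv]; exact hc z hz⟩
      · simp
      · intro v w _ _ hv hw
        refine ⟨fun z hz => ?_, fun z hz => ?_⟩
        · rw [mul_apply']; exact hv.1 _ (hw.1 _ hz)
        · rw [mul_inv_rev, mul_apply']; exact hw.2 _ (hv.2 _ hz)
      · intro v _ hv
        exact ⟨hv.2, by simpa using hv.1⟩
    exact (key w hw).1 _ (by simp [Uset, orb4])
  · have h1 : s₁ ∈ W := Subgroup.subset_closure (by simp)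
    have h2 : s₂ ∈ W := Subgroup.subset_closure (by simp)
    rintro z (((rfl | rfl | rfl | rfl) | (rfl | rfl | rfl | rfl)) | (rfl | rfl | rfl | rfl))
    · exact ⟨1, one_mem _, by simp⟩
    · exact ⟨s₂ * s₁ * s₂, mul_mem (mul_mem h2 h1) h2, by
        simp only [mul_apply', s₁_apply, s₂_apply, Prod.mk.injEq]
        first
          | (constructor <;> ring)
          | ring
          | skip⟩
    · exact ⟨s₁ * s₂ * s₁, mul_mem (mul_mem h1 h2) h1, by
        simp only [mul_apply', s₁_apply, s₂_apply, Prod.mk.injEq]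
        first
          | (constructor <;> ring)
          | ring
          | skip⟩
    · exact ⟨s₁ * s₂ * s₁ * s₂ * s₁ * s₂, mul_mem (mul_mem (mul_mem (mul_mem (mul_mem h1 h2) h1) h2) h1) h2, by
        simp only [mul_apply', s₁_apply, s₂_apply, Prod.mk.injEq]
        first
          | (constructor <;> ring)
          | ring
          | skip⟩
    · exact ⟨s₁, h1, by
        simp only [s₁_apply, Prod.mk.injEq]
        first
          | (constructor <;> ring)
          | ring
          | skip⟩
    · exact ⟨s₂ * s₁ * s₂ * s₁, mul_mem (mul_mem (mul_mem h2 h1) h2) h1, by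
        simp only [mul_apply', s₁_apply, s₂_apply, Prod.mk.injEq]
        first
          | (constructor <;> ring)
          | ring
          | skip⟩
    · exact ⟨s₁ * s₂, mul_mem h1 h2, by
        simp only [mul_apply', s₁_apply, s₂_apply, Prod.mk.injEq]
        first
          | (constructor <;> ring)
          | ring
          | skip⟩
    · exact ⟨s₂ * s₁ * s₂ * s₁ * s₂, mul_mem (mul_mem (mul_mem (mul_mem h2 h1) h2) h1) h2, by
        simp only [mul_apply', s₁_apply, s₂_apply, Prod.mk.injEq]
        first
          | (constructor <;> ring)
          | ring
          | skip⟩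
    · exact ⟨s₂ * s₁, mul_mem h2 h1, by
        simp only [mul_apply', s₁_apply, s₂_apply, Prod.mk.injEq]
        first
          | (constructor <;> ring)
          | ring
          | skip⟩
    · exact ⟨s₂, h2, by
        simp only [s₂_apply, Prod.mk.injEq]
        first
          | (constructor <;> ring)
          | exact ⟨by ring, trivial⟩
          | ring
          | skip⟩
    · exact ⟨s₁ * s₂ * s₁ * s₂ * s₁, mul_mem (mul_mem (mul_mem (mul_mem h1 h2) h1) h2) h1, by
        simp only [mul_apply', s₁_apply, s₂_apply, Prod.mk.injEq]
        first
          | (constructor <;> ring)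
          | ring
          | skip⟩
    · exact ⟨s₁ * s₂ * s₁ * s₂, mul_mem (mul_mem (mul_mem h1 h2) h1) h2, by
        simp only [mul_apply', s₁_apply, s₂_apply, Prod.mk.injEq]
        first
          | (constructor <;> ring)
          | ring
          | skip⟩

lemma orbWH_of_mem {y : ℝ × ℝ} {c d : ℝ} (h : y ∈ orb4 c d) : orbWH y = orb4 c d := by
  rcases h with rfl | rfl | rfl | rfl
  · exact orbWH_eq c d
  · rw [orbWH_eq, orb4_neg_left]
  · rw [orbWH_eq, orb4_neg_right]
  · rw [orbWH_eq, orb4_neg_left, orb4_neg_right]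

lemma orb4_finite (c d : ℝ) : (orb4 c d).Finite := by
  unfold orb4; exact Set.toFinite _

lemma image_orbWH_orb4 (c d : ℝ) : orbWH '' orb4 c d = {orb4 c d} := by
  apply Set.Subset.antisymm
  · rintro S ⟨y, hy, rfl⟩
    simp [orbWH_of_mem hy]
  · intro S hS
    rw [Set.mem_singleton_iff] at hS
    subst hS
    exact ⟨(c, d), by simp [orb4], orbWH_eq c d⟩


set_option maxHeartbeats 2000000 in
/-- For regular `x`, the `W`-orbit of `x` has 12 elements and decomposes into
exactly 3 orbits of `W_H`, each of size 4. -/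
theorem stmt16 :
    ∀ x : ℝ × ℝ, (∀ γ ∈ Φ, B x γ ≠ 0) →
      (orbW x).ncard = 12 ∧
      (∀ y ∈ orbW x, orbWH y ⊆ orbW x ∧ (orbWH y).ncard = 4) ∧
      (orbWH '' orbW x).ncard = 3 := by
  rintro ⟨a, b⟩ hreg
  have ha : a ≠ 0 := by
    intro h
    exact hreg (2,0) (Or.inl rfl) (show a * 2 + 3 * b * 0 = 0 by linarith)
  have hb : b ≠ 0 := by
    intro h
    exact hreg (0,2) (Or.inr (Or.inr (Or.inr (Or.inr (Or.inr (Or.inr (Or.inl rfl)))))))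
      (show a * 0 + 3 * b * 2 = 0 by linarith)
  have h13 : a + 3*b ≠ 0 := by
    intro h
    exact hreg (1,1) (Or.inr (Or.inr (Or.inl rfl)))
      (show a * 1 + 3 * b * 1 = 0 by linarith)
  have hm13 : a - 3*b ≠ 0 := by
    intro h
    exact hreg (1,-1) (Or.inr (Or.inr (Or.inr (Or.inl rfl))))
      (show a * 1 + 3 * b * (-1) = 0 by linarith)
  have h11 : a + b ≠ 0 := by
    intro h
    exact hreg (3,1) (Or.inr (Or.inr (Or.inr (Or.inr (Or.inr (Or.inr (Or.inr (Or.inr (Or.inl rfl)))))))))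
      (show a * 3 + 3 * b * 1 = 0 by linarith)
  have hm11 : a - b ≠ 0 := by
    intro h
    exact hreg (3,-1) (Or.inr (Or.inr (Or.inr (Or.inr (Or.inr (Or.inr (Or.inr (Or.inr (Or.inr (Or.inl rfl))))))))))
      (show a * 3 + 3 * b * (-1) = 0 by linarith)
  have hp : (a+3*b)/2 ≠ 0 := fun h => h13 (by linarith)
  have hq : (a-b)/2 ≠ 0 := fun h => hm11 (by linarith)
  have hr : (a-3*b)/2 ≠ 0 := fun h => hm13 (by linarith)
  have hs : (a+b)/2 ≠ 0 := fun h => h11 (by linarith)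
  have d12 : Disjoint (orb4 a b) (orb4 ((a+3*b)/2) ((a-b)/2)) := by
    rw [Set.disjoint_left]
    intro z hz hz'
    rcases mem_orb4_fst hz with h | h <;> rcases mem_orb4_fst hz' with h' | h' <;>
      first | exact hm13 (by linarith) | exact h11 (by linarith)
  have d13 : Disjoint (orb4 a b) (orb4 ((a-3*b)/2) ((a+b)/2)) := by
    rw [Set.disjoint_left]
    intro z hz hz'
    rcases mem_orb4_fst hz with h | h <;> rcases mem_orb4_fst hz' with h' | h' <;>
      first | exact h13 (by linarith) | exact hm11 (by linarith)
  have d23 : Disjoint (orb4 ((a+3*b)/2) ((a-b)/2)) (orb4 ((a-3*b)/2) ((a+b)/2)) := by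
    rw [Set.disjoint_left]
    intro z hz hz'
    rcases mem_orb4_fst hz with h | h <;> rcases mem_orb4_fst hz' with h' | h' <;>
      first | exact ha (by linarith) | exact hb (by linarith)
  refine ⟨?_, ?_, ?_⟩
  · rw [orbW_eq, Uset,
      Set.ncard_union_eq (Disjoint.union_left d13 d23)
        ((orb4_finite _ _).union (orb4_finite _ _)) (orb4_finite _ _),
      Set.ncard_union_eq d12 (orb4_finite _ _) (orb4_finite _ _),
      ncard_orb4 ha hb, ncard_orb4 hp hq, ncard_orb4 hr hs]
  · intro y hy
    rw [orbW_eq] at hy ⊢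
    rcases hy with (hy | hy) | hy
    · rw [orbWH_of_mem hy]
      exact ⟨(Set.subset_union_left).trans Set.subset_union_left, ncard_orb4 ha hb⟩
    · rw [orbWH_of_mem hy]
      exact ⟨(Set.subset_union_right).trans Set.subset_union_left, ncard_orb4 hp hq⟩
    · rw [orbWH_of_mem hy]
      exact ⟨Set.subset_union_right, ncard_orb4 hr hs⟩
  · rw [orbW_eq, Uset, Set.image_union, Set.image_union,
      image_orbWH_orb4, image_orbWH_orb4, image_orbWH_orb4]
    have hmem1 : ((a, b) : ℝ × ℝ) ∈ orb4 a b := by simp [orb4]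
    have hmem2 : (((a+3*b)/2, (a-b)/2) : ℝ × ℝ) ∈ orb4 ((a+3*b)/2) ((a-b)/2) := by simp [orb4]
    have ne12 : orb4 a b ≠ orb4 ((a+3*b)/2) ((a-b)/2) := by
      intro h
      exact Set.disjoint_left.mp d12 hmem1 (h ▸ hmem1)
    have ne13 : orb4 a b ≠ orb4 ((a-3*b)/2) ((a+b)/2) := by
      intro h
      exact Set.disjoint_left.mp d13 hmem1 (h ▸ hmem1)
    have ne23 : orb4 ((a+3*b)/2) ((a-b)/2) ≠ orb4 ((a-3*b)/2) ((a+b)/2) := by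
      intro h
      exact Set.disjoint_left.mp d23 hmem2 (h ▸ hmem2)
    rw [Set.singleton_union, Set.union_singleton,
      Set.ncard_insert_of_notMem (by
        simp only [Set.mem_insert_iff, Set.mem_singleton_iff, not_or]
        exact ⟨Ne.symm ne13, Ne.symm ne23⟩) (Set.toFinite _),
      Set.ncard_insert_of_notMem (by simpa using ne12) (Set.toFinite _),
      Set.ncard_singleton]
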